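/- Let n = 2m with m ≥ 2 and let P_n be the regular n-gon. For each k with 0 ≤ k < m, the k-th meridian γ_k of the double of P_n is a half-geodesic of period 2w with respect to the pseudometric D: namely D(γ_k(t + 2w), γ_k(t)) = 0 for all t ∈ ℝ, and D(γ_k(s), γ_k(t)) = |s − t| whenever |s − t| ≤ w. -/

import Mathlib

open Real

noncomputable section

/-- The Euclidean plane. -/
abbrev E2 : Type := EuclideanSpace ℝ (Fin 2)

/-- The point `(x, y)` in the Euclidean plane. -/
def pt (x y : ℝ) : E2 := !₂[x, y]

/-- The regular `n`-gon: the convex hull of the `n`-th roots of unity. -/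
def Pgon (n : ℕ) : Set E2 :=
  convexHull ℝ
    (Set.range fun k : Fin n => pt (Real.cos (2 * π * k / n)) (Real.sin (2 * π * k / n)))

/-- The pseudometric of the double of a plane set `P`: two points on the same
face are at their Euclidean distance, while points on opposite faces are at
the infimum over boundary points `z ∈ ∂P` of `‖x - z‖ + ‖z - y‖`. -/
def doubleDist (P : Set E2) (p q : Bool × E2) : ℝ :=
  if p.1 = q.1 then ‖p.2 - q.2‖
  else sInf ((fun z => ‖p.2 - z‖ + ‖z - q.2‖) '' frontier P)

/-- The unit outward normal to the `k`-th edge of the regular `n`-gon. -/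
def outNormal (n k : ℕ) : E2 :=
  pt (Real.cos ((2 * k + 1) * π / n)) (Real.sin ((2 * k + 1) * π / n))

/-- The `k`-th meridian of the double of the regular `n`-gon (`n` even),
periodic of period `2w` where `w = 2 cos(π/n)`: it runs through the center of
the top face from the midpoint `m_k = a • â_k` of the `k`-th edge to the
midpoint of the opposite edge, then back through the bottom face. -/
def meridian (n k : ℕ) (t : ℝ) : Bool × E2 :=
  let a := Real.cos (π / n)
  let w := 2 * a
  let t' := t - 2 * w * (⌊t / (2 * w)⌋ : ℝ)
  if t' < w then (false, a • outNormal n k - t' • outNormal n k)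
  else (true, -(a • outNormal n k) + (t' - w) • outNormal n k)

namespace MeridianAux

open scoped RealInnerProductSpace

lemma inner_pt (x y x' y' : ℝ) : ⟪pt x y, pt x' y'⟫ = x * x' + y * y' := by
  simp [pt, PiLp.inner_apply, Fin.sum_univ_two, mul_comm]

lemma norm_pt (x y : ℝ) : ‖pt x y‖ = Real.sqrt (x ^ 2 + y ^ 2) := by
  rw [EuclideanSpace.norm_eq]
  simp [pt, Fin.sum_univ_two, sq]

lemma pt_add (x y x' y' : ℝ) : pt x y + pt x' y' = pt (x + x') (y + y') := by
  ext i; fin_cases i <;> simp [pt]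

lemma pt_smul (c x y : ℝ) : c • pt x y = pt (c * x) (c * y) := by
  ext i; fin_cases i <;> simp [pt]

lemma pt_neg (x y : ℝ) : -pt x y = pt (-x) (-y) := by
  ext i; fin_cases i <;> simp [pt]

lemma norm_outNormal (n k : ℕ) : ‖outNormal n k‖ = 1 := by
  rw [outNormal, norm_pt, Real.cos_sq_add_sin_sq, Real.sqrt_one]

variable {n : ℕ}

lemma cos_pi_div_pos (hn : 3 ≤ n) : 0 < Real.cos (π / n) := by
  apply Real.cos_pos_of_mem_Ioo
  constructor
  · have : 0 < π / n := by positivity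
    linarith [Real.pi_pos]
  · rw [div_lt_iff₀ (by positivity)]
    have h3 : (3:ℝ) ≤ n := by exact_mod_cast hn
    have hπ := Real.pi_pos
    calc π < π / 2 * 3 := by linarith
      _ ≤ π / 2 * n := by nlinarith

lemma abs_cos_odd_le (hn : 2 ≤ n) (he : Even n) (r : ℤ) (hr : Odd r) :
    |Real.cos (r * π / n)| ≤ Real.cos (π / n) := by
  have hn0 : (0:ℤ) < n := by exact_mod_cast Nat.lt_of_lt_of_le (by norm_num) hn
  have hnr : (n:ℝ) ≠ 0 := by positivity
  set r' : ℤ := r % n with hr'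
  have hdec : r = n * (r / n) + r' := (Int.mul_ediv_add_emod r n).symm
  have hr'0 : 0 ≤ r' := Int.emod_nonneg r (by omega)
  have hr'n : r' < n := Int.emod_lt_of_pos r hn0
  have heven : Even ((n:ℤ) * (r / (n:ℤ))) :=
    (Even.mul_right (by exact_mod_cast he) _)
  have heq2 : r' = r - (n:ℤ) * (r / (n:ℤ)) := by omega
  have hodd : Odd r' := heq2 ▸ hr.sub_even heven
  have h1 : 1 ≤ r' := by
    rcases hodd with ⟨c, hc⟩; omega
  have h2 : r' ≤ n - 1 := by omega
  have hcast : (r:ℝ) = (n:ℝ) * ((r / (n:ℤ) : ℤ):ℝ) + (r':ℝ) := by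
    exact_mod_cast congrArg (Int.cast : ℤ → ℝ) hdec
  have harg : (r:ℝ) * π / n = r' * π / n + ((r / (n:ℤ) : ℤ):ℝ) * π := by
    field_simp
    linear_combination hcast
  rw [harg, Real.cos_add_int_mul_pi, abs_mul]
  have habs1 : |((-1:ℝ)) ^ (r / (n:ℤ))| = 1 := by
    rcases Int.even_or_odd (r / (n:ℤ)) with h | h
    · rw [h.neg_one_zpow, abs_one]
    · rw [h.neg_one_zpow]; simp
  rw [habs1, one_mul]
  have hx0 : 0 ≤ (r':ℝ) * π / n := by
    have : (0:ℝ) ≤ r' := by exact_mod_cast hr'0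
    positivity
  have hcast1 : (1:ℝ) ≤ (r':ℝ) := by exact_mod_cast h1
  have hcast2 : (r':ℝ) ≤ (n:ℝ) - 1 := by
    have : (r':ℝ) ≤ ((n - 1 : ℤ) : ℝ) := by exact_mod_cast h2
    push_cast at this; linarith
  have hnpos : (0:ℝ) < n := by positivity
  have hπ : 0 < π := Real.pi_pos
  have hup : Real.cos ((r':ℝ) * π / n) ≤ Real.cos (π / n) := by
    apply Real.cos_le_cos_of_nonneg_of_le_pi (by positivity)
    · rw [div_le_iff₀ hnpos]; nlinarith
    · rw [div_le_div_iff₀ hnpos hnpos]; nlinarith [mul_pos hπ hnpos, hcast1]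
  have hlo : -Real.cos (π / n) ≤ Real.cos ((r':ℝ) * π / n) := by
    have h5 : Real.cos (((n:ℝ) - 1) * π / n) ≤ Real.cos ((r':ℝ) * π / n) := by
      apply Real.cos_le_cos_of_nonneg_of_le_pi hx0
      · rw [div_le_iff₀ hnpos]; nlinarith
      · rw [div_le_div_iff₀ hnpos hnpos]; nlinarith [mul_pos hπ hnpos, hcast2]
    have heq : ((n:ℝ) - 1) * π / n = π - π / n := by field_simp
    rw [heq, Real.cos_pi_sub] at h5
    linarith
  rw [abs_le]; exact ⟨hlo, hup⟩

/-- The `j`-th vertex. -/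
def vtx (n j : ℕ) : E2 := pt (Real.cos (2 * π * j / n)) (Real.sin (2 * π * j / n))

lemma vtx_mem (hn : 0 < n) (j : ℕ) : vtx n j ∈ Pgon n := by
  apply subset_convexHull
  refine ⟨⟨j % n, Nat.mod_lt _ hn⟩, ?_⟩
  have hnn : (n : ℝ) ≠ 0 := by positivity
  set q : ℤ := (j : ℤ) / (n : ℤ) with hqd
  have h0 : ((j % n : ℕ) : ℝ) + (n : ℝ) * (q : ℝ) = (j : ℝ) := by
    have hz : ((j % n : ℕ) : ℤ) + (n : ℤ) * q = (j : ℤ) := by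
      rw [Int.natCast_mod, hqd]
      exact Int.emod_add_mul_ediv _ _
    have hz' := congrArg (Int.cast : ℤ → ℝ) hz
    push_cast at hz'
    exact hz'
  have hcos : 2 * π * ((j % n : ℕ) : ℝ) / n
      = 2 * π * j / n + ((-q : ℤ) : ℝ) * (2 * π) := by
    have hq' : ((-q : ℤ) : ℝ) = -(q : ℝ) := by push_cast; ring
    rw [hq']
    field_simp
    linear_combination h0
  show pt (Real.cos (2 * π * ((j % n : ℕ):ℝ) / n)) (Real.sin (2 * π * ((j % n : ℕ):ℝ) / n))
      = vtx n j
  rw [hcos, Real.cos_add_int_mul_two_pi, Real.sin_add_int_mul_two_pi]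
  rfl

lemma inner_vtx_outNormal (j k : ℕ) :
    ⟪vtx n j, outNormal n k⟫ = Real.cos (((2 * (j:ℤ) - 2 * k - 1) : ℤ) * π / n) := by
  rw [vtx, outNormal, inner_pt, ← Real.cos_sub]
  congr 1
  push_cast
  ring

lemma pgon_closed (n : ℕ) : IsClosed (Pgon n) :=
  (Set.finite_range _).isClosed_convexHull (𝕜 := ℝ)

lemma pgon_convex (n : ℕ) : Convex ℝ (Pgon n) := convex_convexHull _ _

lemma pgon_slab (hn : 2 ≤ n) (he : Even n) (k : ℕ) :
    ∀ x ∈ Pgon n, |⟪x, outNormal n k⟫| ≤ Real.cos (π / n) := by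
  intro x hx
  have hlin : IsLinearMap ℝ (fun x : E2 => ⟪x, outNormal n k⟫) :=
    ⟨fun a b => inner_add_left _ _ _, fun c a => real_inner_smul_left _ _ _⟩
  have hconv : Convex ℝ {x : E2 | |⟪x, outNormal n k⟫| ≤ Real.cos (π / n)} := by
    have h := (convex_halfSpace_le hlin (Real.cos (π / n))).inter
      (convex_halfSpace_ge hlin (-(Real.cos (π / n))))
    refine Eq.subst (motive := fun S => Convex ℝ S) ?_ h
    ext z
    simp only [Set.mem_setOf_eq, Set.mem_inter_iff, abs_le]
    tauto
  refine convexHull_min ?_ hconv hx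
  rintro _ ⟨j, rfl⟩
  show |⟪vtx n (j:ℕ), outNormal n k⟫| ≤ _
  rw [inner_vtx_outNormal]
  exact abs_cos_odd_le hn he _ ⟨(j:ℤ) - k - 1, by ring⟩

lemma edge_midpoint (j : ℕ) :
    (1/2 : ℝ) • vtx n j + (1/2 : ℝ) • vtx n (j+1)
      = Real.cos (π / n) • pt (Real.cos ((2 * (j:ℝ) + 1) * π / n))
          (Real.sin ((2 * (j:ℝ) + 1) * π / n)) := by
  have hA : 2 * π * (j:ℝ) / n = (2 * (j:ℝ) + 1) * π / n - π / n := by ring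
  have hB : 2 * π * ((j+1 : ℕ):ℝ) / n = (2 * (j:ℝ) + 1) * π / n + π / n := by
    push_cast; ring
  have hpt : ∀ x y x' y' : ℝ, x = x' → y = y' → pt x y = pt x' y' := by
    intros x y x' y' h h'; rw [h, h']
  rw [vtx, vtx, pt_smul, pt_smul, pt_smul, pt_add, hA, hB,
    Real.cos_sub, Real.cos_add, Real.sin_sub, Real.sin_add]
  apply hpt <;> ring

lemma midpoint_mem {m : ℕ} (hm : 2 ≤ m) (hn : n = 2 * m) (k : ℕ) (hk : k < m) :
    Real.cos (π / n) • outNormal n k ∈ Pgon n ∧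
      -(Real.cos (π / n) • outNormal n k) ∈ Pgon n := by
  have hn0 : 0 < n := by omega
  have hcomb : ∀ j : ℕ, (1/2 : ℝ) • vtx n j + (1/2 : ℝ) • vtx n (j+1) ∈ Pgon n := by
    intro j
    exact (pgon_convex n) (vtx_mem hn0 j) (vtx_mem hn0 (j+1))
      (by norm_num) (by norm_num) (by norm_num)
  constructor
  · have h := edge_midpoint (n := n) k
    have hout : pt (Real.cos ((2 * (k:ℝ) + 1) * π / n)) (Real.sin ((2 * (k:ℝ) + 1) * π / n))
        = outNormal n k := rfl
    rw [hout] at h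
    exact h ▸ hcomb k
  · have h := edge_midpoint (n := n) (k + m)
    have harg : (2 * ((k + m : ℕ):ℝ) + 1) * π / n = (2 * (k:ℝ) + 1) * π / n + π := by
      have hne : (n:ℝ) ≠ 0 := by positivity
      have hnm : (n:ℝ) = 2 * m := by exact_mod_cast hn
      push_cast
      field_simp [hnm]
      linarith
    have hout : pt (Real.cos ((2 * ((k + m : ℕ):ℝ) + 1) * π / n))
        (Real.sin ((2 * ((k + m : ℕ):ℝ) + 1) * π / n)) = -outNormal n k := by
      rw [harg, Real.cos_add_pi, Real.sin_add_pi, outNormal, pt_neg]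
    rw [hout, smul_neg] at h
    exact h ▸ hcomb (k + m)

lemma notMem_interior (hn : 2 ≤ n) (he : Even n) (k : ℕ) (p : E2)
    (hp : |⟪p, outNormal n k⟫| = Real.cos (π / n)) : p ∉ interior (Pgon n) := by
  intro hmem
  obtain ⟨ε, hε, hball⟩ := Metric.isOpen_iff.mp isOpen_interior p hmem
  set s : ℝ := if 0 ≤ ⟪p, outNormal n k⟫ then 1 else -1 with hs
  have hsabs : |s| = 1 := by
    rw [hs]; split <;> norm_num
  have hq : p + (ε/2 * s) • outNormal n k ∈ Pgon n := by
    apply interior_subset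
    apply hball
    rw [Metric.mem_ball, dist_eq_norm]
    have hnorm : ‖p + (ε/2 * s) • outNormal n k - p‖ = ε/2 := by
      rw [add_sub_cancel_left, norm_smul, norm_outNormal, mul_one]
      rw [Real.norm_eq_abs, abs_mul, hsabs, mul_one, abs_of_pos (by linarith)]
    rw [hnorm]; linarith
  have hin := pgon_slab hn he k _ hq
  rw [inner_add_left, real_inner_smul_left, real_inner_self_eq_norm_sq,
    norm_outNormal] at hin
  rw [abs_le] at hin
  rcases le_or_gt 0 (⟪p, outNormal n k⟫) with h | h
  · rw [abs_of_nonneg h] at hp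
    have hs1 : s = 1 := by rw [hs, if_pos h]
    rw [hs1] at hin
    have := hin.2
    simp only [one_pow, mul_one] at this
    linarith
  · rw [abs_of_neg h] at hp
    have hs1 : s = -1 := by rw [hs, if_neg (not_le.mpr h)]
    rw [hs1] at hin
    have := hin.1
    simp only [one_pow, mul_one] at this
    linarith

lemma midpoint_frontier {m : ℕ} (hm : 2 ≤ m) (hn : n = 2 * m) (k : ℕ) (hk : k < m) :
    Real.cos (π / n) • outNormal n k ∈ frontier (Pgon n) ∧
      -(Real.cos (π / n) • outNormal n k) ∈ frontier (Pgon n) := by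
  have hn2 : 2 ≤ n := by omega
  have he : Even n := ⟨m, by omega⟩
  have ha : 0 < Real.cos (π / n) := cos_pi_div_pos (by omega)
  have hmem := midpoint_mem hm hn k hk
  have hinner : ⟪Real.cos (π / n) • outNormal n k, outNormal n k⟫ = Real.cos (π / n) := by
    rw [real_inner_smul_left, real_inner_self_eq_norm_sq, norm_outNormal]; ring
  rw [(pgon_closed n).frontier_eq]
  constructor
  · exact ⟨hmem.1, notMem_interior hn2 he k _ (by rw [hinner, abs_of_pos ha])⟩
  · refine ⟨hmem.2, notMem_interior hn2 he k _ ?_⟩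
    rw [inner_neg_left, hinner, abs_neg, abs_of_pos ha]

lemma exists_vtx_inner_ge (hn : 0 < n) (y : E2) (hy : y ≠ 0) :
    ∃ j : ℕ, j < n ∧ Real.cos (π / n) * ‖y‖ ≤ ⟪y, vtx n j⟫ := by
  have hπ := Real.pi_pos
  have hnpos : (0:ℝ) < n := by exact_mod_cast hn
  set c : ℂ := ⟨y 0, y 1⟩ with hc
  have hynorm : ‖y‖ = ‖c‖ := by
    rw [EuclideanSpace.norm_eq, Complex.norm_def, Complex.normSq_mk]
    simp [Fin.sum_univ_two, sq]
  have hc0 : c ≠ 0 := by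
    intro h
    apply hy
    have h0 : y 0 = 0 := congrArg Complex.re h
    have h1 : y 1 = 0 := congrArg Complex.im h
    ext i; fin_cases i <;> simpa
  have habs : (0:ℝ) < ‖c‖ := by
    simpa using norm_pos_iff.mpr hc0
  set φ : ℝ := Complex.arg c with hφ
  have hy0 : y 0 = ‖y‖ * Real.cos φ := by
    rw [Complex.cos_arg hc0, hynorm]
    field_simp; rfl
  have hy1 : y 1 = ‖y‖ * Real.sin φ := by
    rw [Complex.sin_arg, hynorm]
    field_simp; rfl
  set β : ℝ := 2 * π / n with hβ
  have hβpos : 0 < β := by positivity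
  set q : ℤ := ⌊φ / β + 1/2⌋ with hq
  have hq1 : (q:ℝ) ≤ φ / β + 1/2 := Int.floor_le _
  have hq2 : φ / β + 1/2 < q + 1 := Int.lt_floor_add_one _
  have hb1 : ((q:ℝ) - 1/2) * β ≤ φ := by
    rw [← le_div_iff₀ hβpos]; linarith
  have hb2 : φ < ((q:ℝ) + 1/2) * β := by
    rw [← div_lt_iff₀ hβpos]; linarith
  set j : ℕ := (q % n).toNat with hj
  have hmod0 : 0 ≤ q % (n:ℤ) := Int.emod_nonneg q (by exact_mod_cast hn.ne')
  have hmodn : q % (n:ℤ) < n := Int.emod_lt_of_pos q (by exact_mod_cast hn)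
  have hjn : j < n := by omega
  have hjq : ((j:ℕ):ℝ) = (q:ℝ) - (n:ℝ) * ((q / (n:ℤ) : ℤ):ℝ) := by
    have hz : ((j:ℕ):ℤ) = q - n * (q / (n:ℤ)) := by
      rw [hj, Int.toNat_of_nonneg hmod0]
      rw [Int.emod_def]
    exact_mod_cast congrArg (Int.cast : ℤ → ℝ) hz
  refine ⟨j, hjn, ?_⟩
  have hinner : ⟪y, vtx n j⟫ = y 0 * Real.cos (2 * π * j / n) + y 1 * Real.sin (2 * π * j / n) := by
    simp [vtx, pt, PiLp.inner_apply, Fin.sum_univ_two]; ring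
  have hAeq : 2 * π * (j:ℝ) / n - φ = ((q:ℝ) * β - φ) + (-(q / (n:ℤ) : ℤ) : ℝ) * (2 * π) := by
    rw [hjq, hβ]
    push_cast
    field_simp
    ring
  have hcosA : Real.cos (2 * π * (j:ℝ) / n - φ) = Real.cos ((q:ℝ) * β - φ) := by
    rw [hAeq]
    exact_mod_cast Real.cos_add_int_mul_two_pi _ (-(q / (n:ℤ)))
  have hge : Real.cos (π / n) ≤ Real.cos ((q:ℝ) * β - φ) := by
    rw [← Real.cos_abs ((q:ℝ) * β - φ)]
    apply Real.cos_le_cos_of_nonneg_of_le_pi (abs_nonneg _)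
    · exact div_le_self hπ.le (by exact_mod_cast hn)
    · have hβ2 : β / 2 = π / n := by rw [hβ]; ring
      rw [abs_le]
      constructor
      · nlinarith
      · nlinarith
  calc Real.cos (π / n) * ‖y‖ ≤ Real.cos ((q:ℝ) * β - φ) * ‖y‖ := by
        apply mul_le_mul_of_nonneg_right hge (norm_nonneg y)
    _ = ⟪y, vtx n j⟫ := by
        rw [← hcosA, hinner, hy0, hy1, Real.cos_sub]
        ring

lemma mem_of_norm_lt (hn3 : 3 ≤ n) (z : E2) (hz : ‖z‖ < Real.cos (π / n)) : z ∈ Pgon n := by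
  by_contra hzP
  obtain ⟨f, u, hfs, hfz⟩ :=
    geometric_hahn_banach_closed_point (pgon_convex n) (pgon_closed n) hzP
  set y := (InnerProductSpace.toDual ℝ E2).symm f with hy
  have hfy : ∀ x : E2, ⟪y, x⟫ = f x := fun x => InnerProductSpace.toDual_symm_apply
  have hn0 : 0 < n := by omega
  have hy0 : y ≠ 0 := by
    intro h
    have h1 := hfs _ (vtx_mem hn0 0)
    have h2 : f (vtx n 0) = 0 := by rw [← hfy, h, inner_zero_left]
    have h3 : f z = 0 := by rw [← hfy, h, inner_zero_left]
    rw [h2] at h1; rw [h3] at hfz; linarith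
  obtain ⟨j, hjn, hge⟩ := exists_vtx_inner_ge hn0 y hy0
  have h3 := hfs _ (vtx_mem hn0 j)
  rw [← hfy] at h3
  have h4 : ⟪y, z⟫ ≤ ‖y‖ * ‖z‖ := real_inner_le_norm _ _
  have h5 : u < ⟪y, z⟫ := by rw [hfy]; exact hfz
  have hynorm : 0 < ‖y‖ := norm_pos_iff.mpr hy0
  nlinarith [mul_lt_mul_of_pos_left hz hynorm]

lemma frontier_norm_ge (hn3 : 3 ≤ n) (z : E2) (hz : z ∈ frontier (Pgon n)) :
    Real.cos (π / n) ≤ ‖z‖ := by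
  by_contra h
  push_neg at h
  have hsub : Metric.ball (0:E2) (Real.cos (π / n)) ⊆ Pgon n := by
    intro x hx
    rw [mem_ball_zero_iff] at hx
    exact mem_of_norm_lt hn3 x hx
  have hint : z ∈ interior (Pgon n) :=
    interior_maximal hsub Metric.isOpen_ball (mem_ball_zero_iff.mpr h)
  exact hz.2 hint

lemma doubleDist_mixed {m : ℕ} (hm : 2 ≤ m) (hn : n = 2 * m) (k : ℕ) (hk : k < m)
    (u v : ℝ) (hu : |u| ≤ Real.cos (π / n)) (hv : |v| ≤ Real.cos (π / n)) :
    sInf ((fun z => ‖u • outNormal n k - z‖ + ‖z - v • outNormal n k‖) '' frontier (Pgon n))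
      = 2 * Real.cos (π / n) - |u + v| := by
  have hn3 : 3 ≤ n := by omega
  set a : ℝ := Real.cos (π / n) with ha
  have ha0 : 0 < a := cos_pi_div_pos hn3
  set A : E2 := outNormal n k with hA
  have hAnorm : ‖A‖ = 1 := norm_outNormal n k
  have hfr := midpoint_frontier hm hn k hk
  -- lower bound
  have hlb : ∀ b ∈ (fun z => ‖u • A - z‖ + ‖z - v • A‖) '' frontier (Pgon n),
      2 * a - |u + v| ≤ b := by
    rintro b ⟨z, hzf, rfl⟩
    show 2 * a - |u + v| ≤ ‖u • A - z‖ + ‖z - v • A‖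
    have hza : a ≤ ‖z‖ := frontier_norm_ge hn3 z hzf
    have hz0 : 0 < ‖z‖ := lt_of_lt_of_le ha0 hza
    have h1 : ⟪z - u • A, z⟫ ≤ ‖u • A - z‖ * ‖z‖ := by
      have := real_inner_le_norm (z - u • A) z
      rwa [norm_sub_rev] at this
    have h2 : ⟪z - v • A, z⟫ ≤ ‖z - v • A‖ * ‖z‖ := real_inner_le_norm _ _
    have hip : |⟪A, z⟫| ≤ ‖z‖ := by
      have := abs_real_inner_le_norm A z
      rwa [hAnorm, one_mul] at this
    rw [inner_sub_left, real_inner_smul_left, real_inner_self_eq_norm_sq] at h1 h2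
    have hprod : (u + v) * ⟪A, z⟫ ≤ |u + v| * ‖z‖ := by
      calc (u + v) * ⟪A, z⟫ ≤ |(u + v) * ⟪A, z⟫| := le_abs_self _
        _ = |u + v| * |⟪A, z⟫| := abs_mul _ _
        _ ≤ |u + v| * ‖z‖ := by
            apply mul_le_mul_of_nonneg_left hip (abs_nonneg _)
    have habsnn : 0 ≤ |u + v| := abs_nonneg _
    nlinarith [mul_nonneg (sub_nonneg.mpr hza) hz0.le, hz0, h1, h2, hprod,
      norm_nonneg (u • A - z), norm_nonneg (z - v • A)]
  have hbdd : BddBelow ((fun z => ‖u • A - z‖ + ‖z - v • A‖) '' frontier (Pgon n)) :=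
    ⟨2 * a - |u + v|, hlb⟩
  have hsmulnorm : ∀ c d : ℝ, ‖c • A - d • A‖ = |c - d| := by
    intro c d
    rw [← sub_smul, norm_smul, hAnorm, mul_one, Real.norm_eq_abs]
  apply le_antisymm
  · rcases le_or_gt 0 (u + v) with h | h
    · have hmem : (fun z => ‖u • A - z‖ + ‖z - v • A‖) (a • A)
          ∈ (fun z => ‖u • A - z‖ + ‖z - v • A‖) '' frontier (Pgon n) :=
        Set.mem_image_of_mem _ hfr.1
      have hval : ‖u • A - a • A‖ + ‖a • A - v • A‖ = 2 * a - |u + v| := by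
        rw [hsmulnorm, hsmulnorm, abs_of_nonpos (by cases' abs_le.mp hu with h1 h2; linarith),
          abs_of_nonneg (by cases' abs_le.mp hv with h1 h2; linarith),
          abs_of_nonneg h]
        ring
      calc sInf _ ≤ ‖u • A - a • A‖ + ‖a • A - v • A‖ := csInf_le hbdd hmem
        _ = 2 * a - |u + v| := hval
    · have hmem : (fun z => ‖u • A - z‖ + ‖z - v • A‖) (-(a • A))
          ∈ (fun z => ‖u • A - z‖ + ‖z - v • A‖) '' frontier (Pgon n) :=
        Set.mem_image_of_mem _ hfr.2
      have hval : ‖u • A - -(a • A)‖ + ‖-(a • A) - v • A‖ = 2 * a - |u + v| := by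
        have e1 : u • A - -(a • A) = u • A - (-a) • A := by rw [neg_smul]
        have e2 : -(a • A) - v • A = (-a) • A - v • A := by rw [neg_smul]
        rw [e1, e2, hsmulnorm, hsmulnorm,
          abs_of_nonneg (by cases' abs_le.mp hu with h1 h2; linarith),
          abs_of_nonpos (by cases' abs_le.mp hv with h1 h2; linarith),
          abs_of_neg h]
        ring
      calc sInf _ ≤ ‖u • A - -(a • A)‖ + ‖-(a • A) - v • A‖ := csInf_le hbdd hmem
        _ = 2 * a - |u + v| := hval
  · apply le_csInf
    · exact ⟨_, Set.mem_image_of_mem _ hfr.1⟩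
    · exact hlb

lemma key_arith (w r d : ℝ) (j : ℤ) (hw : 0 < w) (hr : |r| < 2*w)
    (hd : d = r + 2*w*j) (hdle : |d| ≤ w) :
    |d| = min |r| (2*w - |r|) := by
  have hj1 : -1 ≤ j ∧ j ≤ 1 := by
    by_contra hcon
    have : (2:ℝ) ≤ |(j:ℝ)| := by
      rw [← Int.cast_abs]
      have h6 : (2:ℤ) ≤ |j| := by
        rcases abs_cases j with ⟨h, _⟩ | ⟨h, _⟩ <;> omega
      exact_mod_cast h6
    have h1 := abs_le.mp hdle
    have h2 := abs_lt.mp hr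
    rcases abs_cases ((j:ℝ)) with ⟨he, _⟩ | ⟨he, _⟩ <;> nlinarith
  obtain ⟨hjl, hjr⟩ := hj1
  interval_cases j <;>
    push_cast at hd <;>
    rcases abs_cases r with ⟨h1, h2⟩ | ⟨h1, h2⟩ <;>
    rcases abs_cases d with ⟨h3, h4⟩ | ⟨h3, h4⟩ <;>
    rw [min_def] <;>
    split_ifs <;>
    linarith


lemma doubleDist_same (P : Set E2) (b : Bool) (x y : E2) :
    doubleDist P (b, x) (b, y) = ‖x - y‖ := by
  simp [doubleDist]

lemma doubleDist_ft (P : Set E2) (x y : E2) :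
    doubleDist P (false, x) (true, y)
      = sInf ((fun z => ‖x - z‖ + ‖z - y‖) '' frontier P) := by
  simp [doubleDist]

lemma doubleDist_tf (P : Set E2) (x y : E2) :
    doubleDist P (true, x) (false, y)
      = sInf ((fun z => ‖x - z‖ + ‖z - y‖) '' frontier P) := by
  simp [doubleDist]

lemma norm_smul_sub (n k : ℕ) (c d : ℝ) :
    ‖c • outNormal n k - d • outNormal n k‖ = |c - d| := by
  rw [← sub_smul, norm_smul, norm_outNormal, mul_one, Real.norm_eq_abs]

/-- reduction of `t` modulo the period `2w = 4 cos (π/n)`. -/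
def red (n : ℕ) (t : ℝ) : ℝ :=
  t - 2 * (2 * Real.cos (π / n)) * (⌊t / (2 * (2 * Real.cos (π / n)))⌋ : ℝ)

lemma meridian_eq_general (k : ℕ) (t : ℝ) :
    meridian n k t = if red n t < 2 * Real.cos (π / n)
      then (false, (Real.cos (π / n) - red n t) • outNormal n k)
      else (true, (red n t - 3 * Real.cos (π / n)) • outNormal n k) := by
  unfold meridian
  show (if red n t < 2 * Real.cos (π / n) then (false, Real.cos (π / n) • outNormal n k - red n t • outNormal n k)
    else (true, -(Real.cos (π / n) • outNormal n k) + (red n t - 2 * Real.cos (π / n)) • outNormal n k)) = _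
  split_ifs with h
  · exact congrArg (Prod.mk false) (by module)
  · exact congrArg (Prod.mk true) (by module)

lemma red_mem (hn3 : 3 ≤ n) (t : ℝ) :
    0 ≤ red n t ∧ red n t < 2 * (2 * Real.cos (π / n)) := by
  have ha : 0 < Real.cos (π / n) := cos_pi_div_pos hn3
  have hW : (0:ℝ) < 2 * (2 * Real.cos (π / n)) := by linarith
  have hred : red n t
      = (2 * (2 * Real.cos (π / n))) * Int.fract (t / (2 * (2 * Real.cos (π / n)))) := by
    rw [red, Int.fract]
    field_simp
  rw [hred]
  constructor
  · exact mul_nonneg hW.le (Int.fract_nonneg _)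
  · calc (2 * (2 * Real.cos (π / n))) * Int.fract (t / (2 * (2 * Real.cos (π / n))))
        < (2 * (2 * Real.cos (π / n))) * 1 :=
          mul_lt_mul_of_pos_left (Int.fract_lt_one _) hW
    _ = 2 * (2 * Real.cos (π / n)) := mul_one _

lemma red_of_mem (hn3 : 3 ≤ n) {t : ℝ} (h0 : 0 ≤ t)
    (h1 : t < 2 * (2 * Real.cos (π / n))) : red n t = t := by
  have ha : 0 < Real.cos (π / n) := cos_pi_div_pos hn3
  have hW : (0:ℝ) < 2 * (2 * Real.cos (π / n)) := by linarith
  have hfl : ⌊t / (2 * (2 * Real.cos (π / n)))⌋ = 0 :=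
    Int.floor_eq_zero_iff.mpr
      (Set.mem_Ico.mpr ⟨div_nonneg h0 hW.le, (div_lt_one hW).mpr h1⟩)
  rw [red, hfl]
  simp

lemma red_red (hn3 : 3 ≤ n) (t : ℝ) : red n (red n t) = red n t :=
  red_of_mem hn3 (red_mem hn3 t).1 (red_mem hn3 t).2

lemma meridian_red (hn3 : 3 ≤ n) (k : ℕ) (t : ℝ) :
    meridian n k t = meridian n k (red n t) := by
  rw [meridian_eq_general k t, meridian_eq_general k (red n t), red_red hn3]

lemma red_add (hn3 : 3 ≤ n) (t : ℝ) :
    red n (t + 2 * (2 * Real.cos (π / n))) = red n t := by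
  have ha : 0 < Real.cos (π / n) := cos_pi_div_pos hn3
  have hW : (0:ℝ) < 2 * (2 * Real.cos (π / n)) := by linarith
  have hdiv : (t + 2 * (2 * Real.cos (π / n))) / (2 * (2 * Real.cos (π / n)))
      = t / (2 * (2 * Real.cos (π / n))) + 1 := by
    rw [add_div, div_self hW.ne']
  rw [red, red, hdiv, Int.floor_add_one]
  push_cast
  ring

lemma core {m : ℕ} (hm : 2 ≤ m) (hn : n = 2 * m) (k : ℕ) (hk : k < m)
    (s t : ℝ) (hs0 : 0 ≤ s) (hs1 : s < 2 * (2 * Real.cos (π / n)))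
    (ht0 : 0 ≤ t) (ht1 : t < 2 * (2 * Real.cos (π / n))) :
    doubleDist (Pgon n) (meridian n k s) (meridian n k t)
      = min |s - t| (2 * (2 * Real.cos (π / n)) - |s - t|) := by
  have hn3 : 3 ≤ n := by omega
  have ha0 : 0 < Real.cos (π / n) := cos_pi_div_pos hn3
  rw [meridian_eq_general k s, meridian_eq_general k t, red_of_mem hn3 hs0 hs1,
    red_of_mem hn3 ht0 ht1]
  split_ifs with h1 h2 h2
  · -- both on the top face
    rw [doubleDist_same, norm_smul_sub]
    have he : Real.cos (π / n) - s - (Real.cos (π / n) - t) = -(s - t) := by ring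
    rw [he, abs_neg]
    have habs : |s - t| ≤ 2 * Real.cos (π / n) := by
      rcases abs_cases (s - t) with ⟨hh, _⟩ | ⟨hh, _⟩ <;> linarith
    rw [min_eq_left (by linarith)]
  · -- s on top, t on bottom
    rw [doubleDist_ft,
      doubleDist_mixed hm hn k hk (Real.cos (π / n) - s) (t - 3 * Real.cos (π / n))
        (abs_le.mpr ⟨by linarith, by linarith⟩) (abs_le.mpr ⟨by linarith, by linarith⟩)]
    have h5 : |s - t| = t - s := by
      rw [abs_sub_comm]; exact abs_of_nonneg (by linarith)
    rw [h5, min_def]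
    split_ifs with hc <;>
      rcases abs_cases (Real.cos (π / n) - s + (t - 3 * Real.cos (π / n))) with
        ⟨he, _⟩ | ⟨he, _⟩ <;>
      rw [he] <;> linarith
  · -- s on bottom, t on top
    rw [doubleDist_tf,
      doubleDist_mixed hm hn k hk (s - 3 * Real.cos (π / n)) (Real.cos (π / n) - t)
        (abs_le.mpr ⟨by linarith, by linarith⟩) (abs_le.mpr ⟨by linarith, by linarith⟩)]
    have h5 : |s - t| = s - t := abs_of_nonneg (by linarith)
    rw [h5, min_def]
    split_ifs with hc <;>
      rcases abs_cases (s - 3 * Real.cos (π / n) + (Real.cos (π / n) - t)) with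
        ⟨he, _⟩ | ⟨he, _⟩ <;>
      rw [he] <;> linarith
  · -- both on the bottom face
    rw [doubleDist_same, norm_smul_sub]
    have he : s - 3 * Real.cos (π / n) - (t - 3 * Real.cos (π / n)) = s - t := by ring
    rw [he]
    have habs : |s - t| ≤ 2 * Real.cos (π / n) := by
      rcases abs_cases (s - t) with ⟨hh, _⟩ | ⟨hh, _⟩ <;> linarith
    rw [min_eq_left (by linarith)]

end MeridianAux

/-- For `n = 2m` even (`m ≥ 2`), each meridian `γ_k` (`0 ≤ k < m`) of the
double of the regular `n`-gon is a half-geodesic of period `2w` for the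
pseudometric `D`: it is `2w`-periodic and minimizes on all subintervals of
length `w = 2 cos(π/n)`. -/
theorem meridian_is_half_geodesic
    (m n : ℕ) (hm : 2 ≤ m) (hn : n = 2 * m) (k : ℕ) (hk : k < m)
    (w : ℝ) (hw : w = 2 * Real.cos (π / n)) :
    (∀ t : ℝ, doubleDist (Pgon n) (meridian n k (t + 2 * w)) (meridian n k t) = 0) ∧
    (∀ s t : ℝ, |s - t| ≤ w →
      doubleDist (Pgon n) (meridian n k s) (meridian n k t) = |s - t|) := by
  have hn3 : 3 ≤ n := by omega
  have ha0 : 0 < Real.cos (π / n) := MeridianAux.cos_pi_div_pos hn3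
  constructor
  · intro t
    rw [hw]
    have hper : meridian n k (t + 2 * (2 * Real.cos (π / n))) = meridian n k t := by
      rw [MeridianAux.meridian_eq_general k (t + 2 * (2 * Real.cos (π / n))),
        MeridianAux.meridian_eq_general k t, MeridianAux.red_add hn3]
    rw [hper]
    simp [doubleDist]
  · intro s t hst
    rw [hw] at hst
    have hms := MeridianAux.meridian_red hn3 (n := n) k s
    have hmt := MeridianAux.meridian_red hn3 (n := n) k t
    rw [hms, hmt,
      MeridianAux.core hm hn k hk _ _ (MeridianAux.red_mem hn3 s).1
        (MeridianAux.red_mem hn3 s).2 (MeridianAux.red_mem hn3 t).1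
        (MeridianAux.red_mem hn3 t).2]
    have hrs := MeridianAux.red_mem hn3 (n := n) s
    have hrt := MeridianAux.red_mem hn3 (n := n) t
    have hr : |MeridianAux.red n s - MeridianAux.red n t|
        < 2 * (2 * Real.cos (π / n)) := by
      rcases abs_cases (MeridianAux.red n s - MeridianAux.red n t) with ⟨he, _⟩ | ⟨he, _⟩ <;>
        rw [he] <;> [linarith [hrs.2, hrt.1]; linarith [hrt.2, hrs.1]]
    have hd : s - t = (MeridianAux.red n s - MeridianAux.red n t)
        + 2 * (2 * Real.cos (π / n))
          * ((⌊s / (2 * (2 * Real.cos (π / n)))⌋ - ⌊t / (2 * (2 * Real.cos (π / n)))⌋ : ℤ) : ℝ) := by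
      unfold MeridianAux.red
      push_cast
      ring
    exact (MeridianAux.key_arith (2 * Real.cos (π / n)) _ _ _ (by linarith) hr hd hst).symm
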